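/- Let A be a Banach algebra and let n ≥ 2 be an even integer. Suppose the left weak topological center of A^(n) (with the first Arens product) is all of A^(n), i.e., Z̃₁ℓ(A^(n)) = A^(n). If A^(n) is weakly amenable, then A^(n-2) is weakly amenable. -/

import Mathlib

open NormedSpace Filter Topology

noncomputable section

universe u

/-- The Arens adjoint of a bounded bilinear map `m : X × Y → Z`:
`⟨adjB m z' x, y⟩ = ⟨z', m x y⟩`.  Its triple iterate `adjB (adjB (adjB m))` is the Arens
(triple adjoint) extension `m*** : X** × Y** → Z**`; for `m` the multiplication of a Banach
algebra this is the first Arens product on the bidual. -/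
def adjB {X Y Z : Type*} [NormedAddCommGroup X] [NormedSpace ℂ X]
    [NormedAddCommGroup Y] [NormedSpace ℂ Y] [NormedAddCommGroup Z] [NormedSpace ℂ Z]
    (m : X →L[ℂ] Y →L[ℂ] Z) : StrongDual ℂ Z →L[ℂ] X →L[ℂ] StrongDual ℂ Y :=
  ((ContinuousLinearMap.compL ℂ X (Y →L[ℂ] Z) (Y →L[ℂ] ℂ)).flip m).comp
    (ContinuousLinearMap.compL ℂ Y Z ℂ)

/-- A Banach algebra recorded through its bounded bilinear multiplication map. -/
structure BAlg : Type (u + 1) where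
  X : Type u
  [nX : NormedAddCommGroup X]
  [mX : NormedSpace ℂ X]
  mul : X →L[ℂ] X →L[ℂ] X

attribute [instance] BAlg.nX BAlg.mX

/-- Passage to the bidual, with the first Arens product. -/
def BAlg.bidual (P : BAlg) : BAlg where
  X := StrongDual ℂ (StrongDual ℂ P.X)
  mul := adjB (adjB (adjB P.mul))

/-- `P.iter j` is `A^(2j)`: the `2j`-th dual with the iterated first Arens product. -/
def BAlg.iter (P : BAlg) : ℕ → BAlg
  | 0 => P
  | k + 1 => (P.iter k).bidual

variable (A : Type u) [NonUnitalNormedRing A] [NormedSpace ℂ A]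
  [SMulCommClass ℂ A A] [IsScalarTower ℂ A A] [CompleteSpace A]

/-- The base algebra `A^(0) = A`. -/
def baseAlg : BAlg where
  X := A
  mul := ContinuousLinearMap.mul ℂ A

/-- `D : X → X*` is a derivation for the algebra structure `M` on `X`, where `X*` carries the
dual bimodule structure `(x·f)(y) = f(yx)`, `(f·x)(y) = f(xy)`. -/
def IsDerivation {X : Type*} [NormedAddCommGroup X] [NormedSpace ℂ X]
    (M : X →L[ℂ] X →L[ℂ] X) (D : X →L[ℂ] StrongDual ℂ X) : Prop :=
  ∀ x y : X, D (M x y) = (D y).comp (M.flip x) + (D x).comp (M y)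

/-- `D : X → X*` is inner: `D x = x·f − f·x` for some `f ∈ X*`. -/
def IsInner {X : Type*} [NormedAddCommGroup X] [NormedSpace ℂ X]
    (M : X →L[ℂ] X →L[ℂ] X) (D : X →L[ℂ] StrongDual ℂ X) : Prop :=
  ∃ f : StrongDual ℂ X, ∀ x : X, D x = f.comp (M.flip x) - f.comp (M x)

/-- Weak amenability of the algebra `(X, M)`: every bounded derivation into `X*` is inner. -/
def WeaklyAmenable {X : Type*} [NormedAddCommGroup X] [NormedSpace ℂ X]
    (M : X →L[ℂ] X →L[ℂ] X) : Prop :=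
  ∀ D : X →L[ℂ] StrongDual ℂ X, IsDerivation M D → IsInner M D

section Aux

set_option synthInstance.maxHeartbeats 400000
set_option synthInstance.maxSize 2048

variable {E : Type*} [NormedAddCommGroup E] [NormedSpace ℂ E]

/-- The dual (adjoint) of a continuous linear map, `g ↦ g ∘ f`. -/
def dmapC {E F : Type*} [NormedAddCommGroup E] [NormedSpace ℂ E]
    [NormedAddCommGroup F] [NormedSpace ℂ F] (f : E →L[ℂ] F) :
    StrongDual ℂ F →L[ℂ] StrongDual ℂ E :=
  (ContinuousLinearMap.compL ℂ E F ℂ).flip f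

/-- Helly-type interpolation: any element of the bidual can be matched exactly on
finitely many functionals by an element of the space. -/
lemma helly (x : StrongDual ℂ (StrongDual ℂ E)) (s : Finset (StrongDual ℂ E)) :
    ∃ a : E, ∀ f ∈ s, f a = x f := by
  classical
  set T : E →ₗ[ℂ] (↥s → ℂ) := LinearMap.pi (fun f => ((f : StrongDual ℂ E) : E →ₗ[ℂ] ℂ)) with hT
  by_cases hv : (fun f : ↥s => x f) ∈ LinearMap.range T
  · obtain ⟨a, ha⟩ := hv
    exact ⟨a, fun f hf => congrFun ha ⟨f, hf⟩⟩
  · exfalso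
    obtain ⟨lam, hlam0, hmap⟩ :=
      Submodule.exists_dual_map_eq_bot_of_notMem hv inferInstance
    set c : ↥s → ℂ := fun f => lam (fun j => if f = j then 1 else 0) with hc
    have hlam : ∀ w : ↥s → ℂ, lam w = ∑ f : ↥s, w f * c f := by
      intro w
      rw [LinearMap.pi_apply_eq_sum_univ]
      simp [c, smul_eq_mul]
    have hTz : ∀ a : E, lam (T a) = 0 := by
      intro a
      have h1 : lam (T a) ∈ (LinearMap.range T).map lam :=
        Submodule.mem_map_of_mem (LinearMap.mem_range_self T a)
      rw [hmap] at h1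
      simpa using h1
    set g : StrongDual ℂ E := ∑ f : ↥s, c f • (f : StrongDual ℂ E) with hg
    have hg0 : g = 0 := by
      ext a
      have h2 := hTz a
      rw [hlam (T a)] at h2
      simpa [g, ContinuousLinearMap.sum_apply, hT, mul_comm, smul_eq_mul] using h2
    have hxg : x g = lam (fun f : ↥s => x f) := by
      rw [hlam]
      simp [g, map_sum, map_smul, smul_eq_mul, mul_comm]
    rw [hg0, map_zero] at hxg
    exact hlam0 hxg.symm

/-- The canonical embedding into the bidual, regarded as taking values in the weak-* bidual. -/
def iotaW (E : Type*) [NormedAddCommGroup E] [NormedSpace ℂ E] :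
    E → WeakDual ℂ (StrongDual ℂ E) :=
  fun a => inclusionInDoubleDual ℂ E a

/-- Goldstine-type density: the canonical image of `E` is weak-* dense in its bidual. -/
lemma denseRange_iota : DenseRange (iotaW E) := by
  have hind : IsInducing
      (fun (w : WeakDual ℂ (StrongDual ℂ E)) (f : StrongDual ℂ E) => w f) := ⟨rfl⟩
  intro x
  apply mem_closure_iff.mpr
  intro o ho hxo
  obtain ⟨t, htO, hto⟩ := hind.isOpen_iff.mp ho
  have hxt : (fun f : StrongDual ℂ E => x f) ∈ t := by
    rw [← hto] at hxo; exact hxo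
  obtain ⟨I, u, hIu, hsub⟩ := isOpen_pi_iff.mp htO _ hxt
  obtain ⟨a, ha⟩ := helly x I
  refine ⟨iotaW E a, ?_, Set.mem_range_self a⟩
  rw [← hto]
  refine Set.mem_preimage.mpr (hsub fun f hf => ?_)
  show f a ∈ u f
  rw [ha f hf]
  exact (hIu f hf).2

/-- The first Arens product on the bidual. -/
def PP (M : E →L[ℂ] E →L[ℂ] E) :=
  adjB (adjB (adjB M))

/-- The canonical (second adjoint) extension of a map `E → E*` to a map `E** → E***`. -/
def DD2 (D : E →L[ℂ] StrongDual ℂ E) :=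
  dmapC (dmapC D)

section ArensCalc

variable (M : E →L[ℂ] E →L[ℂ] E) (D : E →L[ℂ] StrongDual ℂ E)

/-- Step 1 of the density argument: the triple derivation identity with a canonical-image
element in the first slot. -/
lemma triple_step1 (hD : IsDerivation M D) (a : E) (z y : StrongDual ℂ (StrongDual ℂ E)) :
    DD2 D (PP M (inclusionInDoubleDual ℂ E a) y) z
      = DD2 D y (PP M z (inclusionInDoubleDual ℂ E a))
        + DD2 D (inclusionInDoubleDual ℂ E a) (PP M y z) := by
  have hcont1 : Continuous fun y : WeakDual ℂ (StrongDual ℂ E) =>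
      DD2 D (PP M (inclusionInDoubleDual ℂ E a) y) z := by
    have h : (fun y : WeakDual ℂ (StrongDual ℂ E) =>
          DD2 D (PP M (inclusionInDoubleDual ℂ E a) y) z)
        = fun y : WeakDual ℂ (StrongDual ℂ E) => y (adjB M (dmapC D z) a) := rfl
    rw [h]
    exact WeakBilin.eval_continuous _ _
  have hcont2 : Continuous fun y : WeakDual ℂ (StrongDual ℂ E) =>
      DD2 D y (PP M z (inclusionInDoubleDual ℂ E a))
        + DD2 D (inclusionInDoubleDual ℂ E a) (PP M y z) := by
    have h : (fun y : WeakDual ℂ (StrongDual ℂ E) =>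
          DD2 D y (PP M z (inclusionInDoubleDual ℂ E a))
            + DD2 D (inclusionInDoubleDual ℂ E a) (PP M y z))
        = fun y : WeakDual ℂ (StrongDual ℂ E) =>
            y (dmapC D (PP M z (inclusionInDoubleDual ℂ E a)))
              + y (adjB (adjB M) z (D a)) := rfl
    rw [h]
    exact (WeakBilin.eval_continuous _ _).add (WeakBilin.eval_continuous _ _)
  have key : (fun y : WeakDual ℂ (StrongDual ℂ E) =>
        DD2 D (PP M (inclusionInDoubleDual ℂ E a) y) z)
      = fun y : WeakDual ℂ (StrongDual ℂ E) =>
          DD2 D y (PP M z (inclusionInDoubleDual ℂ E a))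
            + DD2 D (inclusionInDoubleDual ℂ E a) (PP M y z) := by
    refine DenseRange.equalizer (denseRange_iota (E := E)) hcont1 hcont2 ?_
    funext b
    show DD2 D (PP M (inclusionInDoubleDual ℂ E a) (inclusionInDoubleDual ℂ E b)) z
      = DD2 D (inclusionInDoubleDual ℂ E b) (PP M z (inclusionInDoubleDual ℂ E a))
        + DD2 D (inclusionInDoubleDual ℂ E a)
            (PP M (inclusionInDoubleDual ℂ E b) z)
    have e1 : DD2 D (PP M (inclusionInDoubleDual ℂ E a) (inclusionInDoubleDual ℂ E b)) z
        = z (D (M a b)) := rfl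
    have e2 : DD2 D (inclusionInDoubleDual ℂ E b)
          (PP M z (inclusionInDoubleDual ℂ E a)) = z ((D b).comp (M.flip a)) := rfl
    have e3 : DD2 D (inclusionInDoubleDual ℂ E a)
          (PP M (inclusionInDoubleDual ℂ E b) z) = z ((D a).comp (M b)) := rfl
    rw [e1, e2, e3, ← map_add, ← hD a b]
  exact congrFun key y

/-- Step 2: the full triple derivation identity on the bidual, using the topological
center hypothesis. -/
lemma triple_step2 (hD : IsDerivation M D)
    (hz : ∀ x : StrongDual ℂ (StrongDual ℂ E),
      Continuous fun y : WeakDual ℂ (StrongDual ℂ E) =>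
        (adjB (adjB (adjB M)) x y : WeakSpace ℂ (StrongDual ℂ (StrongDual ℂ E))))
    (y z x : StrongDual ℂ (StrongDual ℂ E)) :
    DD2 D (PP M x y) z = DD2 D y (PP M z x) + DD2 D x (PP M y z) := by
  have hcont1 : Continuous fun x : WeakDual ℂ (StrongDual ℂ E) => DD2 D (PP M x y) z := by
    have h : (fun x : WeakDual ℂ (StrongDual ℂ E) => DD2 D (PP M x y) z)
        = fun x : WeakDual ℂ (StrongDual ℂ E) => x (adjB (adjB M) y (dmapC D z)) := rfl
    rw [h]
    exact WeakBilin.eval_continuous _ _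
  have hcont2 : Continuous fun x : WeakDual ℂ (StrongDual ℂ E) =>
      DD2 D y (PP M z x) + DD2 D x (PP M y z) := by
    have c1 : Continuous fun x : WeakDual ℂ (StrongDual ℂ E) => DD2 D y (PP M z x) := by
      exact (DD2 D y).continuous.comp (hz z)
    have c2 : Continuous fun x : WeakDual ℂ (StrongDual ℂ E) => DD2 D x (PP M y z) := by
      have h : (fun x : WeakDual ℂ (StrongDual ℂ E) => DD2 D x (PP M y z))
          = fun x : WeakDual ℂ (StrongDual ℂ E) => x (dmapC D (PP M y z)) := rfl
      rw [h]
      exact WeakBilin.eval_continuous _ _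
    exact c1.add c2
  have key : (fun x : WeakDual ℂ (StrongDual ℂ E) => DD2 D (PP M x y) z)
      = fun x : WeakDual ℂ (StrongDual ℂ E) => DD2 D y (PP M z x) + DD2 D x (PP M y z) := by
    refine DenseRange.equalizer (denseRange_iota (E := E)) hcont1 hcont2 ?_
    funext a
    exact triple_step1 M D hD a z y
  exact congrFun key x

set_option maxHeartbeats 1000000 in
/-- The key derivation-extension theorem: if the bidual with the first Arens product has
full left weak topological center and is weakly amenable, so is the original algebra. -/
theorem main_aux
    (hz : ∀ x : StrongDual ℂ (StrongDual ℂ E),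
      Continuous fun y : WeakDual ℂ (StrongDual ℂ E) =>
        (adjB (adjB (adjB M)) x y : WeakSpace ℂ (StrongDual ℂ (StrongDual ℂ E))))
    (hwa : WeaklyAmenable (adjB (adjB (adjB M)))) :
    WeaklyAmenable M := by
  intro D hD
  have hDer : IsDerivation (X := StrongDual ℂ (StrongDual ℂ E)) (PP M) (DD2 D) := by
    intro x y
    ext z
    have h := triple_step2 M D hD hz y z x
    simpa using h
  obtain ⟨f, hf⟩ := hwa (DD2 D) hDer
  refine ⟨f.comp (inclusionInDoubleDual ℂ E), fun a => ?_⟩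
  ext b
  have h1 : DD2 D (inclusionInDoubleDual ℂ E a) (inclusionInDoubleDual ℂ E b)
      = (D a) b := rfl
  have h2 := DFunLike.congr_fun (hf (inclusionInDoubleDual ℂ E a))
      (inclusionInDoubleDual ℂ E b)
  rw [h1] at h2
  have e1 : (f.comp ((adjB (adjB (adjB M))).flip (inclusionInDoubleDual ℂ E a)))
        (inclusionInDoubleDual ℂ E b) = f (inclusionInDoubleDual ℂ E (M b a)) := by
    have e : adjB (adjB (adjB M)) (inclusionInDoubleDual ℂ E b) (inclusionInDoubleDual ℂ E a)
        = inclusionInDoubleDual ℂ E (M b a) := by ext g; rfl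
    show f (adjB (adjB (adjB M)) (inclusionInDoubleDual ℂ E b) (inclusionInDoubleDual ℂ E a))
      = f (inclusionInDoubleDual ℂ E (M b a))
    rw [e]
  have e2 : (f.comp (adjB (adjB (adjB M)) (inclusionInDoubleDual ℂ E a)))
        (inclusionInDoubleDual ℂ E b) = f (inclusionInDoubleDual ℂ E (M a b)) := by
    have e : adjB (adjB (adjB M)) (inclusionInDoubleDual ℂ E a) (inclusionInDoubleDual ℂ E b)
        = inclusionInDoubleDual ℂ E (M a b) := by ext g; rfl
    show f (adjB (adjB (adjB M)) (inclusionInDoubleDual ℂ E a) (inclusionInDoubleDual ℂ E b))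
      = f (inclusionInDoubleDual ℂ E (M a b))
    rw [e]
  simp only [ContinuousLinearMap.sub_apply] at h2
  rw [e1, e2] at h2
  simpa [ContinuousLinearMap.comp_apply, ContinuousLinearMap.flip_apply,
    ContinuousLinearMap.sub_apply] using h2

end ArensCalc

end Aux

/-- with `n = 2*(j+1) ≥ 2` even; `S` is level `n-2`, so
`A^(n) = (S.X)**` carries the first Arens product `adjB³ S.mul`: if
`Z̃₁ℓ(A^(n)) = A^(n)` (for every `x ∈ A^(n)` the map `y ↦ xy` is weak*-to-weak continuous)
and `A^(n)` is weakly amenable, then `A^(n-2)` is weakly amenable. -/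
theorem stmt17 (j : ℕ)
    (hz : ∀ x : StrongDual ℂ (StrongDual ℂ (baseAlg A |>.iter j).X),
      Continuous fun y : WeakDual ℂ (StrongDual ℂ (baseAlg A |>.iter j).X) =>
        (adjB (adjB (adjB (baseAlg A |>.iter j).mul)) x y :
          WeakSpace ℂ (StrongDual ℂ (StrongDual ℂ (baseAlg A |>.iter j).X))))
    (hwa : WeaklyAmenable (X := StrongDual ℂ (StrongDual ℂ (baseAlg A |>.iter j).X))
      (adjB (adjB (adjB (baseAlg A |>.iter j).mul)))) :
    WeaklyAmenable (X := (baseAlg A |>.iter j).X) (baseAlg A |>.iter j).mul :=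
  main_aux (baseAlg A |>.iter j).mul hz hwa

end
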